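/- For every x > 0, (x+1)·[(x+1)log(1 + 1/x) − 1] = 1/2 + ∫₀¹ (1 − t)²/(x + t) dt. Equivalently, 1/(x·g(x)) = 1/2 + ∫₀¹ (1 − t)²/(x + t) dt, where g(x) = 1/( x(x+1)[(x+1)log(1 + 1/x) − 1] ). -/

import Mathlib

/-- `g(x) = 1/( x(x+1)[(x+1)log(1 + 1/x) − 1] )`. -/
noncomputable def gfun (x : ℝ) : ℝ :=
  1 / (x * (x + 1) * ((x + 1) * Real.log (1 + 1 / x) - 1))

/-- For every `x > 0`, `(x+1)·[(x+1)log(1+1/x) − 1] = 1/2 + ∫₀¹ (1−t)²/(x+t) dt`;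
equivalently, `1/(x·g(x))` equals the same right-hand side. -/
theorem one_over_x_g_stieltjes (x : ℝ) (hx : 0 < x) :
    ((x + 1) * ((x + 1) * Real.log (1 + 1 / x) - 1) =
      1 / 2 + ∫ t in (0 : ℝ)..1, (1 - t) ^ 2 / (x + t)) ∧
    (1 / (x * gfun x) = 1 / 2 + ∫ t in (0 : ℝ)..1, (1 - t) ^ 2 / (x + t)) := by
  have hx1 : (0:ℝ) < x + 1 := by linarith
  have hlog : Real.log (1 + 1 / x) = Real.log (x + 1) - Real.log x := by
    rw [← Real.log_div (by positivity) hx.ne']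
    congr 1
    field_simp
  have hint : (∫ t in (0 : ℝ)..1, (1 - t) ^ 2 / (x + t)) =
      ((x+1)^2 * Real.log (x+1) - 2*(x+1)*1 + (x+1)^2/2)
      - ((x+1)^2 * Real.log (x+0) - 2*(x+1)*0 + (x+0)^2/2) := by
    refine intervalIntegral.integral_eq_sub_of_hasDerivAt
      (f := fun t : ℝ => (x+1)^2 * Real.log (x+t) - 2*(x+1)*t + (x+t)^2/2) ?_ ?_
    · intro t ht
      rw [Set.uIcc_of_le (by norm_num)] at ht
      have hxt : 0 < x + t := by linarith [ht.1]
      have h1 : HasDerivAt (fun t : ℝ => Real.log (x + t)) (1 / (x + t)) t := by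
        have := (Real.hasDerivAt_log hxt.ne').comp t ((hasDerivAt_id t).const_add x)
        simpa [Function.comp_def] using this
      have h2 : HasDerivAt (fun t : ℝ => (x+1)^2 * Real.log (x+t) - 2*(x+1)*t + (x+t)^2/2)
          ((x+1)^2 * (1/(x+t)) - 2*(x+1) + (x+t)) t := by
        have ha := (h1.const_mul ((x+1)^2)).sub
          ((hasDerivAt_id t).const_mul (2*(x+1)))
        have hb : HasDerivAt (fun t : ℝ => (x+t)^2/2) (x+t) t := by
          have := (((hasDerivAt_id t).const_add x).pow 2).div_const 2
          simpa using this
        have := ha.add hb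
        refine this.congr_deriv ?_
        ring
      refine h2.congr_deriv ?_
      field_simp
      ring
    · apply ContinuousOn.intervalIntegrable
      apply ContinuousOn.div
      · fun_prop
      · fun_prop
      · intro t ht
        rw [Set.uIcc_of_le (by norm_num)] at ht
        have : 0 < x + t := by linarith [ht.1]
        exact this.ne'
  have key : (x + 1) * ((x + 1) * Real.log (1 + 1 / x) - 1) =
      1 / 2 + ∫ t in (0 : ℝ)..1, (1 - t) ^ 2 / (x + t) := by
    rw [hint, hlog]
    ring
  refine ⟨key, ?_⟩
  have h2 : 1 / (x * gfun x) = (x + 1) * ((x + 1) * Real.log (1 + 1 / x) - 1) := by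
    unfold gfun
    rcases eq_or_ne ((x + 1) * Real.log (1 + 1 / x) - 1) 0 with h | h
    · rw [h]; simp
    · field_simp
  rw [h2, key]
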